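/- arXiv:1612.07877 — 3 statements merged into one kernel-verified Lean document; each statement's English description precedes it below -/
import Mathlib

section
/- A pair (j₁, j₂) of elements of the polynomial algebra in q,p is commutator-conservative, i.e. there exists J with j₁ = (1/i)[q,J] and j₂ = (1/i)[p,J], if and only if the curl condition -∂j₁/∂q = ∂j₂/∂p holds, where ∂X/∂q := (-1/i)[p,X] and ∂X/∂p := (1/i)[q,X]. -/
/-- The defining relation of the Weyl algebra: `q p - p q = i • 1`,
with `q = ι 0` and `p = ι 1`. -/
inductive WeylRel : FreeAlgebra ℂ (Fin 2) → FreeAlgebra ℂ (Fin 2) → Prop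
  | ccr : WeylRel
      (FreeAlgebra.ι ℂ (0 : Fin 2) * FreeAlgebra.ι ℂ (1 : Fin 2)
        - FreeAlgebra.ι ℂ (1 : Fin 2) * FreeAlgebra.ι ℂ (0 : Fin 2))
      (Complex.I • 1)

/-- The Weyl algebra over ℂ generated by `q`, `p` with `[q,p] = i • 1`. -/
abbrev Weyl : Type := RingQuot WeylRel

noncomputable def Weyl.q : Weyl := RingQuot.mkAlgHom ℂ WeylRel (FreeAlgebra.ι ℂ 0)
noncomputable def Weyl.p : Weyl := RingQuot.mkAlgHom ℂ WeylRel (FreeAlgebra.ι ℂ 1)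

noncomputable section WeylAux

open MvPolynomial

abbrev P2 : Type := MvPolynomial (Fin 2) ℂ


lemma pderiv_comm' (i j : Fin 2) (f : P2) :
    pderiv i (pderiv j f) = pderiv j (pderiv i f) := by
  induction f using MvPolynomial.induction_on' with
  | monomial m a =>
      simp only [pderiv_monomial, Finsupp.tsub_apply, Finsupp.single_apply]
      rw [tsub_right_comm]
      congr 1
      by_cases h : i = j
      · subst h; ring
      · simp only [if_neg h, if_neg (Ne.symm h), Nat.sub_zero]
        ring
  | add f g hf hg => simp [hf, hg]

def Qop : Module.End ℂ P2 := LinearMap.mulLeft ℂ (X 0)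

def Pop : Module.End ℂ P2 :=
  LinearMap.mulLeft ℂ (X 1) - Complex.I • ((pderiv (0 : Fin 2) : Derivation ℂ P2 P2) : P2 →ₗ[ℂ] P2)

def Rq : Module.End ℂ P2 :=
  LinearMap.mulLeft ℂ (X 0) - Complex.I • ((pderiv (1 : Fin 2) : Derivation ℂ P2 P2) : P2 →ₗ[ℂ] P2)

def Rp : Module.End ℂ P2 := LinearMap.mulLeft ℂ (X 1)

lemma weyl_op_rel : Qop * Pop - Pop * Qop = Complex.I • (1 : Module.End ℂ P2) := by
  apply LinearMap.ext; intro f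
  simp only [Qop, Pop, LinearMap.sub_apply, Module.End.mul_apply, LinearMap.smul_apply,
    LinearMap.mulLeft_apply, Derivation.coeFn_coe, Module.End.one_apply, map_sub,
    Derivation.leibniz, pderiv_X_self, one_smul, map_smul, smul_add, smul_eq_mul]
  simp only [smul_eq_C_mul]
  ring


def rhoPre : FreeAlgebra ℂ (Fin 2) →ₐ[ℂ] Module.End ℂ P2 :=
  FreeAlgebra.lift ℂ ![Qop, Pop]

lemma rhoPre_rel : ∀ ⦃x y⦄, WeylRel x y → rhoPre x = rhoPre y := by
  rintro _ _ ⟨⟩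
  simp only [rhoPre, map_sub, map_mul, map_smul, map_one, FreeAlgebra.lift_ι_apply,
    Matrix.cons_val_zero, Matrix.cons_val_one, Matrix.head_cons]
  exact weyl_op_rel

def rho : Weyl →ₐ[ℂ] Module.End ℂ P2 :=
  RingQuot.liftAlgHom ℂ ⟨rhoPre, rhoPre_rel⟩

lemma rho_q : rho Weyl.q = Qop := by
  simp [rho, Weyl.q, RingQuot.liftAlgHom_mkAlgHom_apply, rhoPre, FreeAlgebra.lift_ι_apply]

lemma rho_p : rho Weyl.p = Pop := by
  simp [rho, Weyl.p, RingQuot.liftAlgHom_mkAlgHom_apply, rhoPre, FreeAlgebra.lift_ι_apply]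

def sigma : Weyl →ₗ[ℂ] P2 where
  toFun W := rho W 1
  map_add' a b := by simp
  map_smul' c a := by simp

lemma sigma_apply (W : Weyl) : sigma W = rho W 1 := rfl

lemma sigma_one : sigma (1 : Weyl) = 1 := by
  simp [sigma_apply, map_one]

theorem Weyl.ind {motive : Weyl → Prop}
    (alg : ∀ c : ℂ, motive (algebraMap ℂ Weyl c))
    (hq : motive Weyl.q) (hp : motive Weyl.p)
    (add : ∀ a b, motive a → motive b → motive (a + b))
    (mul : ∀ a b, motive a → motive b → motive (a * b)) (W : Weyl) : motive W := by
  obtain ⟨x, rfl⟩ := RingQuot.mkAlgHom_surjective ℂ WeylRel W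
  induction x using FreeAlgebra.induction with
  | grade0 c => rw [AlgHom.commutes]; exact alg c
  | grade1 i =>
      fin_cases i
      · exact hq
      · exact hp
  | add a b ha hb => rw [map_add]; exact add _ _ ha hb
  | mul a b ha hb => rw [map_mul]; exact mul _ _ ha hb

lemma commute_Qop_Rq : Commute Qop Rq := by
  apply LinearMap.ext; intro f
  simp only [Qop, Rq, Module.End.mul_apply, LinearMap.sub_apply, LinearMap.smul_apply,
    LinearMap.mulLeft_apply, Derivation.coeFn_coe, map_sub, map_smul, Derivation.leibniz,
    pderiv_X_of_ne (show (0:Fin 2) ≠ 1 by decide), smul_eq_mul, smul_add]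
  ring_nf
  simp only [smul_eq_C_mul]
  ring

lemma commute_Qop_Rp : Commute Qop Rp := by
  apply LinearMap.ext; intro f
  simp only [Qop, Rp, Module.End.mul_apply, LinearMap.mulLeft_apply]
  ring

lemma commute_Pop_Rq : Commute Pop Rq := by
  apply LinearMap.ext; intro f
  simp only [Pop, Rq, Module.End.mul_apply, LinearMap.sub_apply, LinearMap.smul_apply,
    LinearMap.mulLeft_apply, Derivation.coeFn_coe, map_sub, map_smul, Derivation.leibniz,
    pderiv_X_self, pderiv_X_of_ne (show (0:Fin 2) ≠ 1 by decide),
    pderiv_X_of_ne (show (1:Fin 2) ≠ 0 by decide), smul_eq_mul, smul_add, one_smul, zero_smul,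
    smul_zero, zero_mul, mul_zero, sub_zero, zero_sub, add_zero, zero_add]
  rw [pderiv_comm' 0 1]
  simp only [smul_eq_C_mul]
  ring

lemma commute_Pop_Rp : Commute Pop Rp := by
  apply LinearMap.ext; intro f
  simp only [Pop, Rp, Module.End.mul_apply, LinearMap.sub_apply, LinearMap.smul_apply,
    LinearMap.mulLeft_apply, Derivation.coeFn_coe, map_sub, map_smul, Derivation.leibniz,
    pderiv_X_self, pderiv_X_of_ne (show (1:Fin 2) ≠ 0 by decide), smul_eq_mul, smul_add,
    one_smul, zero_mul, mul_zero, sub_zero, zero_sub, add_zero, zero_add, zero_smul, smul_zero]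

lemma rho_commute (W : Weyl) : Commute (rho W) Rq ∧ Commute (rho W) Rp := by
  induction W using Weyl.ind with
  | alg c =>
      refine ⟨?_, ?_⟩ <;>
        simpa using Algebra.commute_algebraMap_left (R := ℂ) c _
  | hq => exact ⟨rho_q ▸ commute_Qop_Rq, rho_q ▸ commute_Qop_Rp⟩
  | hp => exact ⟨rho_p ▸ commute_Pop_Rq, rho_p ▸ commute_Pop_Rp⟩
  | add a b ha hb => exact ⟨by rw [map_add]; exact ha.1.add_left hb.1,
      by rw [map_add]; exact ha.2.add_left hb.2⟩
  | mul a b ha hb => exact ⟨by rw [map_mul]; exact ha.1.mul_left hb.1,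
      by rw [map_mul]; exact ha.2.mul_left hb.2⟩

lemma sigma_q_mul (W : Weyl) : sigma (Weyl.q * W) = X 0 * sigma W := by
  simp only [sigma_apply, map_mul, Module.End.mul_apply, rho_q, Qop, LinearMap.mulLeft_apply]

lemma sigma_p_mul (W : Weyl) :
    sigma (Weyl.p * W) = X 1 * sigma W - Complex.I • pderiv 0 (sigma W) := by
  simp only [sigma_apply, map_mul, Module.End.mul_apply, rho_p, Pop, LinearMap.sub_apply,
    LinearMap.smul_apply, LinearMap.mulLeft_apply, Derivation.coeFn_coe]

lemma sigma_mul_q (W : Weyl) :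
    sigma (W * Weyl.q) = X 0 * sigma W - Complex.I • pderiv 1 (sigma W) := by
  have h := (rho_commute W).1
  have : rho W (Rq 1) = Rq (rho W 1) := by
    have := congrArg (fun T => T 1) h.symm
    simpa [Module.End.mul_apply] using this.symm
  have hRq1 : Rq (1 : P2) = X 0 := by
    simp [Rq, pderiv_one]
  calc sigma (W * Weyl.q) = rho W (rho Weyl.q 1) := by
        simp [sigma_apply, map_mul, Module.End.mul_apply]
    _ = rho W (Rq 1) := by rw [rho_q, hRq1]; simp [Qop]
    _ = Rq (sigma W) := by rw [this]; rfl
    _ = X 0 * sigma W - Complex.I • pderiv 1 (sigma W) := by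
        simp [Rq]

lemma sigma_mul_p (W : Weyl) : sigma (W * Weyl.p) = X 1 * sigma W := by
  have h := (rho_commute W).2
  have : rho W (Rp 1) = Rp (rho W 1) := by
    have := congrArg (fun T => T 1) h.symm
    simpa [Module.End.mul_apply] using this.symm
  calc sigma (W * Weyl.p) = rho W (rho Weyl.p 1) := by
        simp [sigma_apply, map_mul, Module.End.mul_apply]
    _ = rho W (Rp 1) := by rw [rho_p]; simp [Pop, Rp, pderiv_one]
    _ = Rp (sigma W) := by rw [this]; rfl
    _ = X 1 * sigma W := by simp [Rp]

lemma sigma_Dp (W : Weyl) :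
    sigma ((-Complex.I) • (Weyl.q * W - W * Weyl.q)) = pderiv 1 (sigma W) := by
  rw [map_smul, map_sub, sigma_q_mul, sigma_mul_q]
  rw [show X 0 * sigma W - (X 0 * sigma W - Complex.I • pderiv 1 (sigma W))
      = Complex.I • pderiv 1 (sigma W) by ring_nf]
  rw [smul_smul]
  norm_num [Complex.I_mul_I]

lemma sigma_Dq (W : Weyl) :
    sigma ((-Complex.I) • (Weyl.p * W - W * Weyl.p)) = -pderiv 0 (sigma W) := by
  rw [map_smul, map_sub, sigma_p_mul, sigma_mul_p]
  rw [show X 1 * sigma W - Complex.I • pderiv 0 (sigma W) - X 1 * sigma W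
      = -(Complex.I • pderiv 0 (sigma W)) by ring_nf]
  rw [smul_neg, smul_smul]
  norm_num [Complex.I_mul_I]

lemma weyl_ccr : Weyl.q * Weyl.p - Weyl.p * Weyl.q = Complex.I • (1 : Weyl) := by
  have h := RingQuot.mkAlgHom_rel ℂ WeylRel.ccr
  simp only [map_sub, map_mul, map_smul, map_one] at h
  exact h

lemma weyl_pq : Weyl.p * Weyl.q = Weyl.q * Weyl.p - Complex.I • (1 : Weyl) := by
  have := weyl_ccr
  linear_combination (norm := module) -this

lemma weyl_p_q_pow (a : ℕ) : Weyl.p * Weyl.q ^ a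
    = Weyl.q ^ a * Weyl.p - ((a : ℂ) * Complex.I) • Weyl.q ^ (a - 1) := by
  induction a with
  | zero => simp
  | succ n ih =>
      rw [pow_succ, ← mul_assoc, ih]
      cases n with
      | zero => simp [weyl_pq, sub_mul, smul_mul_assoc]
      | succ m =>
          rw [sub_mul, smul_mul_assoc, mul_assoc, weyl_pq]
          simp only [Nat.add_sub_cancel]
          rw [show Weyl.q ^ m * Weyl.q = Weyl.q ^ (m + 1) from (pow_succ _ _).symm,
            show Weyl.q ^ (m + 1) * (Weyl.q * Weyl.p - Complex.I • 1)
              = Weyl.q ^ (m + 1) * Weyl.q * Weyl.p - Complex.I • Weyl.q ^ (m + 1) by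
                rw [mul_sub, mul_assoc]
                rw [mul_smul_comm, mul_one]]
          push_cast
          match_scalars <;> ring

def tau : P2 →ₗ[ℂ] Weyl :=
  (basisMonomials (Fin 2) ℂ).constr ℂ (fun m => Weyl.q ^ (m 0) * Weyl.p ^ (m 1))

lemma tau_basis (m : Fin 2 →₀ ℕ) :
    tau (monomial m 1) = Weyl.q ^ (m 0) * Weyl.p ^ (m 1) := by
  have : (monomial m (1:ℂ)) = basisMonomials (Fin 2) ℂ m :=
    (congrFun (coe_basisMonomials (Fin 2) ℂ) m).symm
  rw [this, tau, Module.Basis.constr_basis]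

lemma monomial_one_eq (m : Fin 2 →₀ ℕ) :
    (monomial m (1:ℂ)) = X 0 ^ (m 0) * X 1 ^ (m 1) := by
  rw [monomial_eq, C_1, one_mul, Finsupp.prod_fintype _ _ (fun i => pow_zero _)]
  exact Fin.prod_univ_two _

lemma sigma_qp_pow (a b : ℕ) :
    sigma (Weyl.q ^ a * Weyl.p ^ b) = X 0 ^ a * X 1 ^ b := by
  induction a with
  | zero =>
      simp only [pow_zero, one_mul]
      induction b with
      | zero => simpa using sigma_one
      | succ n ihn =>
          rw [pow_succ', sigma_p_mul, ihn]
          rw [Derivation.leibniz_pow]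
          simp [pderiv_X_of_ne (show (1:Fin 2) ≠ 0 by decide), pow_succ']
  | succ n ihn =>
      rw [pow_succ', mul_assoc, sigma_q_mul, ihn, pow_succ']
      ring

lemma sigma_tau (u : P2) : sigma (tau u) = u := by
  have : sigma.comp tau = LinearMap.id := by
    apply (basisMonomials (Fin 2) ℂ).ext
    intro m
    have hb : (basisMonomials (Fin 2) ℂ) m = monomial m 1 :=
      congrFun (coe_basisMonomials (Fin 2) ℂ) m
    rw [LinearMap.comp_apply, hb, tau_basis, sigma_qp_pow,
      LinearMap.id_apply, ← monomial_one_eq]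
  exact congrArg (fun T => T u) this

lemma basis_apply' (m : Fin 2 →₀ ℕ) :
    (basisMonomials (Fin 2) ℂ) m = monomial m 1 :=
  congrFun (coe_basisMonomials (Fin 2) ℂ) m

lemma tau_X0_mul (u : P2) : tau (X 0 * u) = Weyl.q * tau u := by
  have : tau.comp (LinearMap.mulLeft ℂ (X 0 : P2))
      = (LinearMap.mulLeft ℂ Weyl.q).comp tau := by
    apply (basisMonomials (Fin 2) ℂ).ext
    intro m
    simp only [LinearMap.comp_apply, LinearMap.mulLeft_apply, basis_apply']
    rw [show (X 0 : P2) * monomial m 1 = X 0 ^ 1 * monomial m 1 by rw [pow_one],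
      ← monomial_single_add, tau_basis, tau_basis]
    simp only [Finsupp.add_apply, Finsupp.single_apply]
    norm_num [pow_add, pow_one, mul_assoc]
  exact congrArg (fun T => T u) this

lemma tau_X1_mul (u : P2) : tau (X 1 * u) = tau u * Weyl.p := by
  have : tau.comp (LinearMap.mulLeft ℂ (X 1 : P2))
      = (LinearMap.mulRight ℂ Weyl.p).comp tau := by
    apply (basisMonomials (Fin 2) ℂ).ext
    intro m
    simp only [LinearMap.comp_apply, LinearMap.mulLeft_apply, LinearMap.mulRight_apply,
      basis_apply']
    rw [show (X 1 : P2) * monomial m 1 = X 1 ^ 1 * monomial m 1 by rw [pow_one],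
      ← monomial_single_add, tau_basis, tau_basis]
    simp only [Finsupp.add_apply, Finsupp.single_apply]
    norm_num [pow_add, pow_one, mul_assoc, pow_mul_comm']
  exact congrArg (fun T => T u) this

lemma tau_monomial (m : Fin 2 →₀ ℕ) (c : ℂ) :
    tau (monomial m c) = c • (Weyl.q ^ (m 0) * Weyl.p ^ (m 1)) := by
  have : (monomial m c : P2) = c • monomial m 1 := by
    rw [← map_smul]; simp
  rw [this, map_smul, tau_basis]

lemma tau_Pop (u : P2) :
    tau (X 1 * u - Complex.I • pderiv 0 u) = Weyl.p * tau u := by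
  have : (tau.comp (LinearMap.mulLeft ℂ (X 1 : P2)
        - Complex.I • ((pderiv (0 : Fin 2) : Derivation ℂ P2 P2) : P2 →ₗ[ℂ] P2)))
      = (LinearMap.mulLeft ℂ Weyl.p).comp tau := by
    apply (basisMonomials (Fin 2) ℂ).ext
    intro m
    simp only [LinearMap.comp_apply, LinearMap.sub_apply, LinearMap.smul_apply,
      LinearMap.mulLeft_apply, Derivation.coeFn_coe, map_sub, map_smul, basis_apply']
    rw [show (X 1 : P2) * monomial m 1 = X 1 ^ 1 * monomial m 1 by rw [pow_one],
      ← monomial_single_add, tau_basis, pderiv_monomial, tau_monomial, tau_basis]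
    simp only [Finsupp.add_apply, Finsupp.single_apply, Finsupp.tsub_apply, one_mul]
    norm_num
    rw [← mul_assoc, weyl_p_q_pow, sub_mul, smul_mul_assoc]
    rw [show Weyl.q ^ (m 0) * Weyl.p * Weyl.p ^ (m 1)
        = Weyl.q ^ (m 0) * Weyl.p ^ (1 + m 1) by
      rw [mul_assoc, ← pow_succ', add_comm]]
    rw [smul_smul, mul_comm Complex.I]
  have h := congrArg (fun T => T u) this
  simpa using h

lemma tau_sigma (W : Weyl) : tau (sigma W) = W := by
  have key : ∀ W : Weyl, ∀ V : Weyl, tau (sigma V) = V → tau (sigma (W * V)) = W * V := by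
    intro W
    induction W using Weyl.ind with
    | alg c =>
        intro V hV
        rw [Algebra.algebraMap_eq_smul_one, smul_mul_assoc, one_mul, map_smul, map_smul, hV]
    | hq => intro V hV; rw [sigma_q_mul, tau_X0_mul, hV]
    | hp =>
        intro V hV
        rw [sigma_p_mul, tau_Pop, hV]
    | add a b ha hb =>
        intro V hV
        rw [add_mul, map_add, map_add, ha V hV, hb V hV]
    | mul a b ha hb =>
        intro V hV
        rw [mul_assoc]
        exact ha _ (hb _ hV)
  have h1 : tau (sigma (1 : Weyl)) = 1 := by
    rw [sigma_one, show (1 : P2) = monomial 0 1 by simp, tau_basis]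
    simp
  simpa using key W 1 h1

lemma sigma_injective : Function.Injective sigma :=
  Function.LeftInverse.injective tau_sigma

def integ (i : Fin 2) : P2 →ₗ[ℂ] P2 :=
  (basisMonomials (Fin 2) ℂ).constr ℂ
    (fun m => monomial (m + Finsupp.single i 1) (((m i : ℂ) + 1)⁻¹))

lemma integ_basis (i : Fin 2) (m : Fin 2 →₀ ℕ) :
    integ i (monomial m 1) = monomial (m + Finsupp.single i 1) (((m i : ℂ) + 1)⁻¹) := by
  rw [← basis_apply', integ, Module.Basis.constr_basis]

lemma pderiv_integ_self (i : Fin 2) (f : P2) : pderiv i (integ i f) = f := by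
  have : ((pderiv (i : Fin 2) : Derivation ℂ P2 P2) : P2 →ₗ[ℂ] P2).comp (integ i)
      = LinearMap.id := by
    apply (basisMonomials (Fin 2) ℂ).ext
    intro m
    simp only [LinearMap.comp_apply, Derivation.coeFn_coe, basis_apply', integ_basis,
      pderiv_monomial, LinearMap.id_apply]
    rw [add_tsub_cancel_right]
    have h0 : ((m i : ℂ) + 1) ≠ 0 := Nat.cast_add_one_ne_zero (m i)
    congr 1
    simp only [Finsupp.add_apply, Finsupp.single_apply, if_pos rfl]
    push_cast
    rw [inv_mul_cancel₀ h0]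
  exact congrArg (fun T => T f) this

lemma pderiv0_integ1 (f : P2) : pderiv 0 (integ 1 f) = integ 1 (pderiv 0 f) := by
  have : ((pderiv (0 : Fin 2) : Derivation ℂ P2 P2) : P2 →ₗ[ℂ] P2).comp (integ 1)
      = (integ 1).comp ((pderiv (0 : Fin 2) : Derivation ℂ P2 P2) : P2 →ₗ[ℂ] P2) := by
    apply (basisMonomials (Fin 2) ℂ).ext
    intro m
    simp only [LinearMap.comp_apply, Derivation.coeFn_coe, basis_apply', integ_basis,
      pderiv_monomial]
    rw [show (monomial (m - Finsupp.single 0 1) ((1:ℂ) * (m 0))) =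
        ((m 0 : ℂ)) • monomial (m - Finsupp.single 0 1) 1 by
      rw [← map_smul]; simp, map_smul, integ_basis, ← map_smul]
    have he : m + Finsupp.single 1 1 - Finsupp.single 0 1
        = m - Finsupp.single 0 1 + Finsupp.single 1 1 := by
      ext j
      fin_cases j <;>
        simp [Finsupp.add_apply, Finsupp.tsub_apply, Finsupp.single_apply]
    have hc : ((m + Finsupp.single (1:Fin 2) 1 : Fin 2 →₀ ℕ) 0 : ℂ) = (m 0 : ℂ) := by
      simp [Finsupp.add_apply, Finsupp.single_apply]
    have hc1 : ((m - Finsupp.single (0:Fin 2) 1 : Fin 2 →₀ ℕ) 1 : ℂ) = (m 1 : ℂ) := by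
      simp [Finsupp.tsub_apply, Finsupp.single_apply]
    rw [he]
    congr 1
    rw [hc, hc1]
    simp [smul_eq_mul]
    ring
  exact congrArg (fun T => T f) this

lemma poincare (f g : P2) (h : -pderiv 0 f = pderiv 1 g) :
    ∃ hh : P2, pderiv 1 hh = f ∧ pderiv 0 hh = -g := by
  set h₁ : P2 := -(integ 0 g) with hh₁
  set r : P2 := f - pderiv 1 h₁ with hr
  have hr0 : pderiv 0 r = 0 := by
    rw [hr, map_sub, hh₁, map_neg, map_neg, pderiv_comm' 0 1, pderiv_integ_self,
      ← h]
    ring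
  refine ⟨h₁ + integ 1 r, ?_, ?_⟩
  · rw [map_add, pderiv_integ_self, hr]; ring
  · rw [map_add, pderiv0_integ1, hr0, map_zero, add_zero, hh₁, map_neg,
      pderiv_integ_self]

end WeylAux

/-- A pair `(j₁, j₂)` in the Weyl algebra is commutator-conservative, i.e. there is a
potential `J` with `j₁ = (1/i)[q,J] = -i • [q,J]` and `j₂ = (1/i)[p,J] = -i • [p,J]`,
if and only if the curl condition `-∂j₁/∂q = ∂j₂/∂p` holds, where
`∂X/∂q := (-1/i)[p,X] = i • [p,X]` and `∂X/∂p := (1/i)[q,X] = -i • [q,X]`. -/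
theorem commutatorConservative_iff_curl (j₁ j₂ : Weyl) :
    (∃ J : Weyl, j₁ = (-Complex.I) • (Weyl.q * J - J * Weyl.q) ∧
        j₂ = (-Complex.I) • (Weyl.p * J - J * Weyl.p)) ↔
    -(Complex.I • (Weyl.p * j₁ - j₁ * Weyl.p))
        = (-Complex.I) • (Weyl.q * j₂ - j₂ * Weyl.q) := by
  rw [show -(Complex.I • (Weyl.p * j₁ - j₁ * Weyl.p))
      = (-Complex.I) • (Weyl.p * j₁ - j₁ * Weyl.p) from (neg_smul (R := ℂ) (M := Weyl) _ _).symm]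
  constructor
  · rintro ⟨J, h1, h2⟩
    apply sigma_injective
    rw [sigma_Dq, sigma_Dp, h1, h2, sigma_Dq, sigma_Dp]
    rw [map_neg, pderiv_comm' 1 0]
  · intro hcurl
    have hc : -MvPolynomial.pderiv 0 (sigma j₁) = MvPolynomial.pderiv 1 (sigma j₂) := by
      have := congrArg sigma hcurl
      rwa [sigma_Dq, sigma_Dp] at this
    obtain ⟨h, hy, hx⟩ := poincare (sigma j₁) (sigma j₂) hc
    refine ⟨tau h, ?_, ?_⟩
    · apply sigma_injective
      rw [sigma_Dp, sigma_tau, hy]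
    · apply sigma_injective
      rw [sigma_Dq, sigma_tau, hx, neg_neg]
end

section
/- Preservation of commutation relations for physically realizable single-mode QSDEs: if H = H* and L are elements of the Weyl algebra with [q,p] = i·1, and one defines g₁ = [q,L], g₂ = [p,L], f_L = (1/2)((g* L) + (g* L)*) componentwise, f_C = -i[x,H], f = f_C + f_L, then the Itô drift of the commutator vanishes: [f₁,p] + [q,f₂] + (g₁* g₂ - g₂* g₁) = 0, and the noise coefficients vanish: [g₁,p] + [q,g₂] = 0 and [g₁*,p] + [q,g₂*] = 0. -/
/-- Preservation of commutation relations for physically realizable single-mode QSDEs: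
with `H = H*`, `L` in a *-algebra with self-adjoint `q`, `p`, `[q,p] = i • 1`, and
`g₁ = [q,L]`, `g₂ = [p,L]`, `f_{L,i} = (1/2)(gᵢ* L + (gᵢ* L)*)`,
`f_i = -i[x_i,H] + f_{L,i}`, the Itô drift of the commutator vanishes:
`[f₁,p] + [q,f₂] + (g₁* g₂ - g₂* g₁) = 0`, and the noise coefficients vanish:
`[g₁,p] + [q,g₂] = 0` and `[g₁*,p] + [q,g₂*] = 0`. -/
theorem physically_realizable_preserves_ccr {A : Type*} [Ring A] [Algebra ℂ A]
    [StarRing A] [StarModule ℂ A] (q p : A) (hq : star q = q) (hp : star p = p)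
    (hqp : q * p - p * q = Complex.I • (1 : A))
    (H L : A) (hH : star H = H)
    (g₁ g₂ f₁ f₂ : A)
    (hg₁ : g₁ = q * L - L * q) (hg₂ : g₂ = p * L - L * p)
    (hf₁ : f₁ = (-Complex.I) • (q * H - H * q)
      + (1 / 2 : ℂ) • (star g₁ * L + star (star g₁ * L)))
    (hf₂ : f₂ = (-Complex.I) • (p * H - H * p)
      + (1 / 2 : ℂ) • (star g₂ * L + star (star g₂ * L))) :
    (f₁ * p - p * f₁) + (q * f₂ - f₂ * q) + (star g₁ * g₂ - star g₂ * g₁) = 0 ∧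
    (g₁ * p - p * g₁) + (q * g₂ - g₂ * q) = 0 ∧
    (star g₁ * p - p * star g₁) + (q * star g₂ - star g₂ * q) = 0 := by
  have hcen : ∀ x : A, (q * p - p * q) * x = x * (q * p - p * q) := by
    intro x
    rw [hqp, smul_mul_assoc, one_mul, mul_smul_comm, mul_one]
  have hsg₁ : star g₁ = star L * q - q * star L := by
    rw [hg₁, star_sub, star_mul, star_mul, hq]
  have hsg₂ : star g₂ = star L * p - p * star L := by
    rw [hg₂, star_sub, star_mul, star_mul, hp]
  have hN : (g₁ * p - p * g₁) + (q * g₂ - g₂ * q) = 0 := by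
    have : (g₁ * p - p * g₁) + (q * g₂ - g₂ * q)
        = (q * p - p * q) * L - L * (q * p - p * q) := by
      rw [hg₁, hg₂]; noncomm_ring
    rw [this, hcen, sub_self]
  have hN' : (star g₁ * p - p * star g₁) + (q * star g₂ - star g₂ * q) = 0 := by
    have : (star g₁ * p - p * star g₁) + (q * star g₂ - star g₂ * q)
        = star L * (q * p - p * q) - (q * p - p * q) * star L := by
      rw [hsg₁, hsg₂]; noncomm_ring
    rw [this, hcen, sub_self]
  refine ⟨?_, hN, hN'⟩
  have key : (f₁ * p - p * f₁) + (q * f₂ - f₂ * q) + (star g₁ * g₂ - star g₂ * g₁)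
      = (-Complex.I) • ((q * p - p * q) * H - H * (q * p - p * q))
        + (1 / 2 : ℂ) • (((star g₁ * p - p * star g₁) + (q * star g₂ - star g₂ * q)) * L
          + star L * ((g₁ * p - p * g₁) + (q * g₂ - g₂ * q))) := by
    rw [hf₁, hf₂, star_mul, star_star, star_mul, star_star, hsg₁, hsg₂, hg₁, hg₂]
    noncomm_ring
    module
  rw [key, hN, hN', hcen, sub_self, smul_zero, zero_mul, mul_zero, add_zero, smul_zero, add_zero]
end

section
/- Shifting the coupling constant preserves physical realizability of the drift correction: let g = (g₁,g₂) be commutator-conservative with g = -i[x, iL] for L = -i(Z + C), C ∈ ℂ, and define f_L = (1/2)(g* L + (g* L)*) componentwise. If f - f_L is commutator-conservative, then for any other constant C₁ ∈ ℂ, with L₁ = -i(Z + C₁) and f_{L,1} = (1/2)(g* L₁ + (g* L₁)*), the difference f - f_{L,1} is also commutator-conservative. -/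
open Complex in
private lemma coupling_key {A : Type*} [Ring A] [Algebra ℂ A] [StarRing A] [StarModule ℂ A]
    (x Jg Z f J₀ : A) (hx : star x = x) (C C₁ : ℂ)
    (h : f - (1 / 2 : ℂ) • (star ((-I) • (x * Jg - Jg * x)) * ((-I) • (Z + C • 1))
          + star (star ((-I) • (x * Jg - Jg * x)) * ((-I) • (Z + C • 1))))
        = (-I) • (x * J₀ - J₀ * x)) :
    f - (1 / 2 : ℂ) • (star ((-I) • (x * Jg - Jg * x)) * ((-I) • (Z + C₁ • 1))
          + star (star ((-I) • (x * Jg - Jg * x)) * ((-I) • (Z + C₁ • 1))))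
        = (-I) • (x * (J₀ - (1/2 : ℂ) • ((-I * (C₁ - C)) • star Jg
              + (starRingEnd ℂ (-I * (C₁ - C))) • Jg))
            - (J₀ - (1/2 : ℂ) • ((-I * (C₁ - C)) • star Jg
              + (starRingEnd ℂ (-I * (C₁ - C))) • Jg)) * x) := by
  rw [sub_eq_iff_eq_add] at h
  subst h
  simp only [star_smul, star_sub, star_mul, star_star, hx, star_one, star_add, smul_sub, smul_add,
    smul_smul, sub_mul, mul_sub, add_mul, mul_add, smul_mul_assoc, mul_smul_comm, mul_one, one_mul,
    map_mul, map_sub, map_neg, Complex.conj_I, RCLike.star_def, map_one, map_ofNat, map_div₀]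
  module

/-- Shifting the coupling constant preserves physical realizability of the drift
correction: let `(g₁,g₂)` be commutator-conservative, `Z ∈ A`, `C, C₁ ∈ ℂ`,
`L = -i(Z + C)`, `L₁ = -i(Z + C₁)`, and `f_{L,i} = (1/2)(gᵢ* L + (gᵢ* L)*)`,
`f_{L₁,i} = (1/2)(gᵢ* L₁ + (gᵢ* L₁)*)`. If `(f₁ - f_{L,1}, f₂ - f_{L,2})` is
commutator-conservative, so is `(f₁ - f_{L₁,1}, f₂ - f_{L₁,2})`. -/
theorem coupling_constant_shift {A : Type*} [Ring A] [Algebra ℂ A] [StarRing A]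
    [StarModule ℂ A] (q p : A) (hq : star q = q) (hp : star p = p)
    (hqp : q * p - p * q = Complex.I • (1 : A))
    (g₁ g₂ : A)
    (hg : ∃ J : A, g₁ = (-Complex.I) • (q * J - J * q) ∧
      g₂ = (-Complex.I) • (p * J - J * p))
    (Z : A) (C C₁ : ℂ) (f₁ f₂ : A)
    (hfL : ∃ J : A,
      f₁ - (1 / 2 : ℂ) • (star g₁ * ((-Complex.I) • (Z + C • 1))
          + star (star g₁ * ((-Complex.I) • (Z + C • 1))))
        = (-Complex.I) • (q * J - J * q) ∧
      f₂ - (1 / 2 : ℂ) • (star g₂ * ((-Complex.I) • (Z + C • 1))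
          + star (star g₂ * ((-Complex.I) • (Z + C • 1))))
        = (-Complex.I) • (p * J - J * p)) :
    ∃ J : A,
      f₁ - (1 / 2 : ℂ) • (star g₁ * ((-Complex.I) • (Z + C₁ • 1))
          + star (star g₁ * ((-Complex.I) • (Z + C₁ • 1))))
        = (-Complex.I) • (q * J - J * q) ∧
      f₂ - (1 / 2 : ℂ) • (star g₂ * ((-Complex.I) • (Z + C₁ • 1))
          + star (star g₂ * ((-Complex.I) • (Z + C₁ • 1))))
        = (-Complex.I) • (p * J - J * p) := by
  obtain ⟨Jg, hg1, hg2⟩ := hg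
  obtain ⟨J₀, h1, h2⟩ := hfL
  subst hg1 hg2
  exact ⟨J₀ - (1/2 : ℂ) • ((-Complex.I * (C₁ - C)) • star Jg
      + (starRingEnd ℂ (-Complex.I * (C₁ - C))) • Jg),
    coupling_key q Jg Z f₁ J₀ hq C C₁ h1,
    coupling_key p Jg Z f₂ J₀ hp C C₁ h2⟩
end
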